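/- Let v = t·d, let A ⊆ {0,1,…,v−1} be a (v,k) modular Golomb ruler, and let σ_t be the permutation of {0,1,…,v−1} with σ_t(a·d+b) = b·t+a for 0 ≤ a ≤ t−1, 0 ≤ b ≤ d−1. Then for all 0 ≤ i, j ≤ v−d−1, the (i, j) entry of A_{σ_t} equals its (i+d, j+d) entry; hence A_{σ_t} is a block double-circulant incidence matrix of a symmetric configuration v_k: it is a t×t array of circulant d×d blocks in which the block in block-position (l, m) depends only on (m − l) mod t up to the cyclic row shift, and the weight of the block in position (l, m) depends only on (m − l) mod t. -/

import Mathlib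

/-- A `(v,k)` modular Golomb ruler, given as a `k`-element set of integers in
`{0,…,v-1}` whose differences over ordered pairs of distinct elements are pairwise
distinct and nonzero modulo `v`. -/
def IsModularGolombRulerNat (v k : ℕ) (A : Finset ℕ) : Prop :=
  A.card = k ∧ (∀ a ∈ A, a < v) ∧
  ∀ a ∈ A, ∀ b ∈ A, ∀ c ∈ A, ∀ d ∈ A, a ≠ b → c ≠ d →
    ((a : ZMod v) - (b : ZMod v) = (c : ZMod v) - (d : ZMod v)) → a = c ∧ b = d

/-- The permutation `σ_t` of `{0,…,v-1}` (with `v = t·d`) defined by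
`σ_t(a·d + b) = b·t + a` for `0 ≤ a ≤ t-1`, `0 ≤ b ≤ d-1`; here `a = x / d`,
`b = x % d`. -/
def sigmaT (t d x : ℕ) : ℕ := x % d * t + x / d

/-- An incidence matrix of a symmetric configuration `v_k`: a `v × v` 0,1-matrix
(values in `Bool`) with all row and column sums equal to `k` that is `J₂`-free. -/
def IsIncidenceMatrix (v k : ℕ) (M : Matrix (Fin v) (Fin v) Bool) : Prop :=
  (∀ i, (Finset.univ.filter (fun j => M i j = true)).card = k) ∧
  (∀ j, (Finset.univ.filter (fun i => M i j = true)).card = k) ∧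
  ∀ i i' j j', i ≠ i' → j ≠ j' →
    ¬(M i j = true ∧ M i j' = true ∧ M i' j = true ∧ M i' j' = true)

section Helpers

lemma mod_eq_of_cast_eq' {v x y : ℕ} (hv : 0 < v) (hx : x < v) (hy : y < v)
    (h : (x : ZMod v) = (y : ZMod v)) : x = y := by
  haveI : NeZero v := ⟨hv.ne'⟩
  rw [← ZMod.val_cast_of_lt hx, h, ZMod.val_cast_of_lt hy]

lemma cast_shift_mod' {v a b : ℕ} (hb : b ≤ v) :
    (((a + v - b) % v : ℕ) : ZMod v) = (a : ZMod v) - b := by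
  have h : b ≤ a + v := by omega
  rw [ZMod.natCast_mod, Nat.cast_sub h, Nat.cast_add, ZMod.natCast_self]
  ring

lemma mod_mul_cast' {v d t : ℕ} (hdt : (d : ZMod v) * t = 0) (n : ℕ) :
    ((n % d : ℕ) : ZMod v) * t = (n : ZMod v) * t := by
  have h := congrArg (Nat.cast : ℕ → ZMod v) (Nat.div_add_mod n d)
  push_cast at h
  linear_combination (t : ZMod v) * h - ((n / d : ℕ) : ZMod v) * hdt

lemma sigmaT_lt' {t d : ℕ} (hd : 0 < d) {x : ℕ} (hx : x < t * d) :
    sigmaT t d x < t * d := by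
  have h1 : x % d < d := Nat.mod_lt _ hd
  have h2 : x / d < t := Nat.div_lt_of_lt_mul (lt_of_lt_of_eq hx (mul_comm t d))
  calc sigmaT t d x < x % d * t + t := by unfold sigmaT; omega
    _ = (x % d + 1) * t := by ring
    _ ≤ d * t := Nat.mul_le_mul_right _ (by omega)
    _ = t * d := Nat.mul_comm _ _

lemma sigmaT_block' {t d m j : ℕ} (hd : 0 < d) (hj : j < d) :
    sigmaT t d (m * d + j) = j * t + m := by
  unfold sigmaT
  rw [mul_comm m d, Nat.mul_add_mod, Nat.mul_add_div hd, Nat.mod_eq_of_lt hj,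
    Nat.div_eq_of_lt hj]
  omega

lemma sigmaT_add_d' {t d x : ℕ} (hd : 0 < d) :
    sigmaT t d (x + d) = sigmaT t d x + 1 := by
  unfold sigmaT
  rw [Nat.add_mod_right, Nat.add_div_right _ hd]
  ring

lemma sigmaT_surj' {t d : ℕ} (ht : 0 < t) (hd : 0 < d) {y : ℕ} (hy : y < t * d) :
    ∃ x, x < t * d ∧ sigmaT t d x = y := by
  have h2 : y / t < d := Nat.div_lt_of_lt_mul hy
  refine ⟨y % t * d + y / t, ?_, ?_⟩
  · have h1 : y % t < t := Nat.mod_lt _ ht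
    calc y % t * d + y / t < y % t * d + d := by omega
      _ = (y % t + 1) * d := by ring
      _ ≤ t * d := Nat.mul_le_mul_right _ (by omega)
  · unfold sigmaT
    rw [mul_comm (y % t) d, Nat.mul_add_mod, Nat.mul_add_div hd,
      Nat.mod_eq_of_lt h2, Nat.div_eq_of_lt h2, Nat.add_zero, mul_comm]
    exact Nat.div_add_mod y t

lemma sigmaT_projs' {t d : ℕ} (ht : 0 < t) {z : ℕ} (hz : z < t * d) :
    sigmaT t d z % t = z / d ∧ sigmaT t d z / t = z % d := by
  have h2 : z / d < t := Nat.div_lt_of_lt_mul (lt_of_lt_of_eq hz (mul_comm t d))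
  unfold sigmaT
  constructor
  · rw [mul_comm (z % d) t, Nat.mul_add_mod, Nat.mod_eq_of_lt h2]
  · rw [mul_comm (z % d) t, Nat.mul_add_div ht, Nat.div_eq_of_lt h2, Nat.add_zero]

lemma sigmaT_inj' {t d : ℕ} (ht : 0 < t) {x y : ℕ}
    (hx : x < t * d) (hy : y < t * d) (h : sigmaT t d x = sigmaT t d y) : x = y := by
  obtain ⟨a1, a2⟩ := sigmaT_projs' ht hx
  obtain ⟨b1, b2⟩ := sigmaT_projs' ht hy
  have hq : x / d = y / d := by rw [← a1, ← b1, h]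
  have hr : x % d = y % d := by rw [← a2, ← b2, h]
  have hx' := Nat.div_add_mod x d
  have hy' := Nat.div_add_mod y d
  have : d * (x / d) + x % d = d * (y / d) + y % d := by rw [hq, hr]
  omega

lemma block_lt' {t d i l : ℕ} (hi : i < d) (hl : l < t) : i * t + l < t * d := by
  calc i * t + l < i * t + t := by omega
    _ = (i + 1) * t := by ring
    _ ≤ d * t := Nat.mul_le_mul_right _ (by omega)
    _ = t * d := Nat.mul_comm _ _

lemma part3_cast' {t d : ℕ} (hdt : (d : ZMod (t*d)) * t = 0) {i j : ℕ} (hi : i < d) :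
    (j : ZMod (t*d)) * t - (i : ZMod (t*d)) * t
      = (((j + d - i) % d : ℕ) : ZMod (t*d)) * t := by
  rw [mod_mul_cast' hdt]
  have hc : ((j + d - i : ℕ) : ZMod (t*d)) = (j : ZMod (t*d)) + d - i := by
    rw [Nat.cast_sub (by omega : i ≤ j + d), Nat.cast_add]
  linear_combination (-(t : ZMod (t*d))) * hc - hdt

lemma weight_key' {t d : ℕ} (ht : 0 < t) (hd : 0 < d)
    (hdt : (d : ZMod (t*d)) * t = 0)
    {l m l' m' : ℕ} (hl : l < t) (hm : m < t) (hl' : l' < t) (hm' : m' < t)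
    (hmod : (m + t - l) % t = (m' + t - l') % t) (j : ℕ) (hj : j < d) :
    (((j + (m + t - l) / t + d - (m' + t - l') / t) % d) * t + m' + t * d - l') % (t * d)
      = (j * t + m + t * d - l) % (t * d) := by
  have hv0 : 0 < t * d := Nat.mul_pos ht hd
  set q := (m + t - l) / t with hqdef
  set q' := (m' + t - l') / t with hq'def
  have hq1 : q ≤ 1 := Nat.le_of_lt_succ (Nat.div_lt_of_lt_mul (by omega : m + t - l < t * 2))
  have hq1' : q' ≤ 1 := Nat.le_of_lt_succ (Nat.div_lt_of_lt_mul (by omega : m' + t - l' < t * 2))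
  set g := (j + q + d - q') % d with hgdef
  have hlv : l ≤ t * d := le_trans hl.le (Nat.le_mul_of_pos_right t hd)
  have hlv' : l' ≤ t * d := le_trans hl'.le (Nat.le_mul_of_pos_right t hd)
  apply mod_eq_of_cast_eq' hv0 (Nat.mod_lt _ hv0) (Nat.mod_lt _ hv0)
  rw [cast_shift_mod' hlv, cast_shift_mod' hlv']
  push_cast
  have f1 : (t : ZMod (t*d)) * q + ((m + t - l) % t : ℕ) = (m : ZMod (t*d)) + t - l := by
    have h := congrArg (Nat.cast : ℕ → ZMod (t*d)) (Nat.div_add_mod (m + t - l) t)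
    rw [Nat.cast_sub (by omega : l ≤ m + t)] at h
    push_cast at h
    linear_combination h
  have f2 : (t : ZMod (t*d)) * q' + ((m + t - l) % t : ℕ) = (m' : ZMod (t*d)) + t - l' := by
    have h := congrArg (Nat.cast : ℕ → ZMod (t*d)) (Nat.div_add_mod (m' + t - l') t)
    rw [Nat.cast_sub (by omega : l' ≤ m' + t), ← hmod] at h
    push_cast at h
    linear_combination h
  have f3 : (g : ZMod (t*d)) * t = ((j + q + d - q' : ℕ) : ZMod (t*d)) * t := by
    rw [hgdef]; exact mod_mul_cast' hdt _
  have f4 : ((j + q + d - q' : ℕ) : ZMod (t*d)) = (j : ZMod (t*d)) + q + d - q' := by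
    rw [Nat.cast_sub (le_trans hq1' (le_trans hd (Nat.le_add_left d (j + q))))]
    push_cast; ring
  linear_combination f3 + (t : ZMod (t*d)) * f4 - f2 + f1 + hdt

lemma ginv' {d q q' : ℕ} (hd : 0 < d) (hq : q ≤ 1) (hq' : q' ≤ 1) {j : ℕ} (hj : j < d) :
    ((j + q + d - q') % d + q' + d - q) % d = j := by
  rw [show (j + q + d - q') % d + q' + d - q = (j + q + d - q') % d + (q' + d - q) from
      by omega,
    Nat.mod_add_mod,
    show j + q + d - q' + (q' + d - q) = j + 2 * d from by omega,
    Nat.add_mul_mod_self_right, Nat.mod_eq_of_lt hj]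

end Helpers

/-- The matrix `A_{σ_t}` (whose `(i,j)` entry is `1` iff
`(σ_t(j) - σ_t(i)) mod v ∈ A`) satisfies: its `(i,j)` entry equals its
`(i+d, j+d)` entry for `0 ≤ i,j ≤ v-d-1`; hence it is a block double-circulant
incidence matrix of a symmetric configuration `v_k`: it is an incidence matrix,
each `d × d` block is circulant (the entry depends only on `(j-i) mod d`), and the
block weights depend only on the block-position difference `(m-l) mod t`. -/
theorem Asigma_block_double_circulant (v t d k : ℕ) (hv : v = t * d)
    (ht : 0 < t) (hd : 0 < d)
    (A : Finset ℕ) (hA : IsModularGolombRulerNat v k A) :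
    (∀ i j : ℕ, i + d < v → j + d < v →
      ((sigmaT t d j + v - sigmaT t d i) % v ∈ A ↔
        (sigmaT t d (j + d) + v - sigmaT t d (i + d)) % v ∈ A)) ∧
    IsIncidenceMatrix v k (fun i j : Fin v =>
      decide ((sigmaT t d j.val + v - sigmaT t d i.val) % v ∈ A)) ∧
    (∀ l m : ℕ, l < t → m < t → ∀ i i' j j' : ℕ, i < d → i' < d → j < d → j' < d →
      (j + d - i) % d = (j' + d - i') % d →
      ((sigmaT t d (m * d + j) + v - sigmaT t d (l * d + i)) % v ∈ A ↔
        (sigmaT t d (m * d + j') + v - sigmaT t d (l * d + i')) % v ∈ A)) ∧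
    (∀ l m l' m' : ℕ, l < t → m < t → l' < t → m' < t →
      (m + t - l) % t = (m' + t - l') % t →
      ((Finset.range d).filter (fun j =>
        (sigmaT t d (m * d + j) + v - sigmaT t d (l * d)) % v ∈ A)).card =
      ((Finset.range d).filter (fun j =>
        (sigmaT t d (m' * d + j) + v - sigmaT t d (l' * d)) % v ∈ A)).card) := by
  obtain ⟨hcard, hbound, hgolomb⟩ := hA
  subst hv
  have hv0 : 0 < t * d := Nat.mul_pos ht hd
  haveI : NeZero (t * d) := ⟨hv0.ne'⟩
  have hdt : (d : ZMod (t * d)) * t = 0 := by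
    rw [← Nat.cast_mul, mul_comm d t, ZMod.natCast_self]
  refine ⟨?_, ⟨?_, ?_, ?_⟩, ?_, ?_⟩
  · -- part 1 : (i,j) entry = (i+d,j+d) entry
    intro i j hi hj
    have h1 : sigmaT t d i < t * d := sigmaT_lt' hd (by omega)
    rw [sigmaT_add_d' hd, sigmaT_add_d' hd,
      show sigmaT t d j + 1 + t * d - (sigmaT t d i + 1)
          = sigmaT t d j + t * d - sigmaT t d i from by omega]
  · -- row sums
    intro i
    rw [← hcard]
    have hci : sigmaT t d i.val < t * d := sigmaT_lt' hd i.isLt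
    apply Finset.card_bij
      (fun (j : Fin (t * d)) _ => (sigmaT t d j.val + t * d - sigmaT t d i.val) % (t * d))
    · intro a ha
      simp only [Finset.mem_filter, Finset.mem_univ, true_and, decide_eq_true_eq] at ha
      exact ha
    · intro a₁ h₁ a₂ h₂ heq
      have hc1 : sigmaT t d a₁.val < t * d := sigmaT_lt' hd a₁.isLt
      have hc2 : sigmaT t d a₂.val < t * d := sigmaT_lt' hd a₂.isLt
      have e1 : ((sigmaT t d a₁.val : ℕ) : ZMod (t * d)) = (sigmaT t d a₂.val : ℕ) := by
        have h := congrArg (Nat.cast : ℕ → ZMod (t * d)) heq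
        rw [cast_shift_mod' hci.le, cast_shift_mod' hci.le] at h
        linear_combination h
      exact Fin.ext (sigmaT_inj' ht a₁.isLt a₂.isLt (mod_eq_of_cast_eq' hv0 hc1 hc2 e1))
    · intro b hb
      obtain ⟨x, hx, hσx⟩ := sigmaT_surj' ht hd (Nat.mod_lt (b + sigmaT t d i.val) hv0)
      have key : (sigmaT t d x + t * d - sigmaT t d i.val) % (t * d) = b := by
        apply mod_eq_of_cast_eq' hv0 (Nat.mod_lt _ hv0) (hbound b hb)
        rw [cast_shift_mod' hci.le, hσx, ZMod.natCast_mod]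
        push_cast
        ring
      refine ⟨⟨x, hx⟩, ?_, key⟩
      simp only [Finset.mem_filter, Finset.mem_univ, true_and, decide_eq_true_eq]
      rw [key]
      exact hb
  · -- column sums
    intro j
    rw [← hcard]
    have hcj : sigmaT t d j.val < t * d := sigmaT_lt' hd j.isLt
    apply Finset.card_bij
      (fun (i : Fin (t * d)) _ => (sigmaT t d j.val + t * d - sigmaT t d i.val) % (t * d))
    · intro a ha
      simp only [Finset.mem_filter, Finset.mem_univ, true_and, decide_eq_true_eq] at ha
      exact ha
    · intro a₁ h₁ a₂ h₂ heq
      have hc1 : sigmaT t d a₁.val < t * d := sigmaT_lt' hd a₁.isLt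
      have hc2 : sigmaT t d a₂.val < t * d := sigmaT_lt' hd a₂.isLt
      have e1 : ((sigmaT t d a₁.val : ℕ) : ZMod (t * d)) = (sigmaT t d a₂.val : ℕ) := by
        have h := congrArg (Nat.cast : ℕ → ZMod (t * d)) heq
        rw [cast_shift_mod' hc1.le, cast_shift_mod' hc2.le] at h
        linear_combination -h
      exact Fin.ext (sigmaT_inj' ht a₁.isLt a₂.isLt (mod_eq_of_cast_eq' hv0 hc1 hc2 e1))
    · intro b hb
      have hbv : b < t * d := hbound b hb
      obtain ⟨x, hx, hσx⟩ := sigmaT_surj' ht hd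
        (Nat.mod_lt (sigmaT t d j.val + t * d - b) hv0)
      have hσxlt : sigmaT t d x < t * d := sigmaT_lt' hd hx
      have key : (sigmaT t d j.val + t * d - sigmaT t d x) % (t * d) = b := by
        apply mod_eq_of_cast_eq' hv0 (Nat.mod_lt _ hv0) hbv
        rw [cast_shift_mod' hσxlt.le, hσx, cast_shift_mod' hbv.le]
        ring
      refine ⟨⟨x, hx⟩, ?_, key⟩
      simp only [Finset.mem_filter, Finset.mem_univ, true_and, decide_eq_true_eq]
      rw [key]
      exact hb
  · -- J₂-free
    intro i i' j j' hii hjj h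
    simp only [decide_eq_true_eq] at h
    obtain ⟨h11, h12, h21, h22⟩ := h
    have hα : sigmaT t d i.val < t * d := sigmaT_lt' hd i.isLt
    have hα' : sigmaT t d i'.val < t * d := sigmaT_lt' hd i'.isLt
    have hβ : sigmaT t d j.val < t * d := sigmaT_lt' hd j.isLt
    have hβ' : sigmaT t d j'.val < t * d := sigmaT_lt' hd j'.isLt
    have c11 := cast_shift_mod' (v := t * d) (a := sigmaT t d j.val) hα.le
    have c12 := cast_shift_mod' (v := t * d) (a := sigmaT t d j'.val) hα.le
    have c21 := cast_shift_mod' (v := t * d) (a := sigmaT t d j.val) hα'.le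
    have c22 := cast_shift_mod' (v := t * d) (a := sigmaT t d j'.val) hα'.le
    have hne1 : (sigmaT t d j.val + t * d - sigmaT t d i.val) % (t * d)
        ≠ (sigmaT t d j.val + t * d - sigmaT t d i'.val) % (t * d) := by
      intro hEq
      have h := congrArg (Nat.cast : ℕ → ZMod (t * d)) hEq
      rw [c11, c21] at h
      have : ((sigmaT t d i.val : ℕ) : ZMod (t * d)) = (sigmaT t d i'.val : ℕ) := by
        linear_combination -h
      exact hii (Fin.ext (sigmaT_inj' ht i.isLt i'.isLt
        (mod_eq_of_cast_eq' hv0 hα hα' this)))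
    have hne2 : (sigmaT t d j'.val + t * d - sigmaT t d i.val) % (t * d)
        ≠ (sigmaT t d j'.val + t * d - sigmaT t d i'.val) % (t * d) := by
      intro hEq
      have h := congrArg (Nat.cast : ℕ → ZMod (t * d)) hEq
      rw [c12, c22] at h
      have : ((sigmaT t d i.val : ℕ) : ZMod (t * d)) = (sigmaT t d i'.val : ℕ) := by
        linear_combination -h
      exact hii (Fin.ext (sigmaT_inj' ht i.isLt i'.isLt
        (mod_eq_of_cast_eq' hv0 hα hα' this)))
    have hdiff :
        (((sigmaT t d j.val + t * d - sigmaT t d i.val) % (t * d) : ℕ) : ZMod (t * d))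
          - ((sigmaT t d j.val + t * d - sigmaT t d i'.val) % (t * d) : ℕ)
        = (((sigmaT t d j'.val + t * d - sigmaT t d i.val) % (t * d) : ℕ) : ZMod (t * d))
          - ((sigmaT t d j'.val + t * d - sigmaT t d i'.val) % (t * d) : ℕ) := by
      rw [c11, c21, c12, c22]
      ring
    obtain ⟨hac, -⟩ := hgolomb _ h11 _ h21 _ h12 _ h22 hne1 hne2 hdiff
    -- hac : (β + V - α) % V = (β' + V - α) % V ⇒ β = β' ⇒ j = j'
    have h := congrArg (Nat.cast : ℕ → ZMod (t * d)) hac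
    rw [c11, c12] at h
    have : ((sigmaT t d j.val : ℕ) : ZMod (t * d)) = (sigmaT t d j'.val : ℕ) := by
      linear_combination h
    exact hjj (Fin.ext (sigmaT_inj' ht j.isLt j'.isLt
      (mod_eq_of_cast_eq' hv0 hβ hβ' this)))
  · -- part 3 : blocks are circulant
    intro l m hl hm i i' j j' hi hi' hj hj' hmod
    rw [sigmaT_block' hd hj, sigmaT_block' hd hj', sigmaT_block' hd hi, sigmaT_block' hd hi']
    have hil : i * t + l < t * d := block_lt' hi hl
    have hil' : i' * t + l < t * d := block_lt' hi' hl
    have E : (j * t + m + t * d - (i * t + l)) % (t * d)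
        = (j' * t + m + t * d - (i' * t + l)) % (t * d) := by
      apply mod_eq_of_cast_eq' hv0 (Nat.mod_lt _ hv0) (Nat.mod_lt _ hv0)
      rw [cast_shift_mod' hil.le, cast_shift_mod' hil'.le]
      have k1 := part3_cast' (t := t) hdt hi (j := j)
      have k2 := part3_cast' (t := t) hdt hi' (j := j')
      rw [hmod] at k1
      push_cast
      linear_combination k1 - k2
    rw [E]
  · -- part 4 : block weights depend only on (m - l) mod t
    intro l m l' m' hl hm hl' hm' hmod
    have hσl : sigmaT t d (l * d) = l := by
      have h := sigmaT_block' (t := t) (m := l) (j := 0) hd hd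
      simpa using h
    have hσl' : sigmaT t d (l' * d) = l' := by
      have h := sigmaT_block' (t := t) (m := l') (j := 0) hd hd
      simpa using h
    have e1 : ∀ x ∈ Finset.range d,
        ((sigmaT t d (m * d + x) + t * d - sigmaT t d (l * d)) % (t * d) ∈ A)
          ↔ ((x * t + m + t * d - l) % (t * d) ∈ A) := by
      intro x hx
      rw [sigmaT_block' hd (Finset.mem_range.mp hx), hσl]
    have e2 : ∀ x ∈ Finset.range d,
        ((sigmaT t d (m' * d + x) + t * d - sigmaT t d (l' * d)) % (t * d) ∈ A)
          ↔ ((x * t + m' + t * d - l') % (t * d) ∈ A) := by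
      intro x hx
      rw [sigmaT_block' hd (Finset.mem_range.mp hx), hσl']
    rw [Finset.filter_congr e1, Finset.filter_congr e2]
    have hq1 : (m + t - l) / t ≤ 1 :=
      Nat.le_of_lt_succ (Nat.div_lt_of_lt_mul (by omega : m + t - l < t * 2))
    have hq1' : (m' + t - l') / t ≤ 1 :=
      Nat.le_of_lt_succ (Nat.div_lt_of_lt_mul (by omega : m' + t - l' < t * 2))
    apply Finset.card_nbij'
      (fun j => (j + (m + t - l) / t + d - (m' + t - l') / t) % d)
      (fun j => (j + (m' + t - l') / t + d - (m + t - l) / t) % d)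
    · intro a ha
      simp only [Finset.mem_coe, Finset.mem_filter, Finset.mem_range] at ha ⊢
      obtain ⟨had, haA⟩ := ha
      refine ⟨Nat.mod_lt _ hd, ?_⟩
      rw [weight_key' ht hd hdt hl hm hl' hm' hmod a had]
      exact haA
    · intro a ha
      simp only [Finset.mem_coe, Finset.mem_filter, Finset.mem_range] at ha ⊢
      obtain ⟨had, haA⟩ := ha
      refine ⟨Nat.mod_lt _ hd, ?_⟩
      rw [weight_key' ht hd hdt hl' hm' hl hm hmod.symm a had]
      exact haA
    · intro a ha
      simp only [Finset.mem_coe, Finset.mem_filter, Finset.mem_range] at ha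
      exact ginv' hd hq1 hq1' ha.1
    · intro a ha
      simp only [Finset.mem_coe, Finset.mem_filter, Finset.mem_range] at ha
      exact ginv' hd hq1' hq1 ha.1
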